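/- Let H₁ and H₂ be Hermitian operators on a nonzero finite-dimensional complex inner product space H with H₂ positive semidefinite, and let K = ker H₂ be nonzero with K ≠ H, so that μ := λ(H₂|_{K⊥}) > 0 (the smallest eigenvalue of H₂ restricted to the orthogonal complement of K). Set J = (8‖H₁‖² + 2‖H₁‖)/μ. Then λ(H₁ + J·H₂) ≥ λ(H₁|_K) − 1/8. (Lemma A.3 of the paper.) -/

import Mathlib

open scoped ComplexInnerProductSpace

/-- The smallest eigenvalue of a Hermitian operator `A`, i.e. the infimum of
`⟨v, A v⟩` over unit vectors `v`. -/
noncomputable def lambdaMin {H : Type*} [NormedAddCommGroup H] [InnerProductSpace ℂ H]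
    (A : H →L[ℂ] H) : ℝ :=
  ⨅ v : {v : H // ‖v‖ = 1}, (⟪(v : H), A v⟫).re

/-- The smallest eigenvalue of the compression of `A` to a subspace `S`, i.e. the
infimum of `⟨v, A v⟩` over unit vectors `v ∈ S`. -/
noncomputable def lambdaMinOn {H : Type*} [NormedAddCommGroup H] [InnerProductSpace ℂ H]
    (A : H →L[ℂ] H) (S : Submodule ℂ H) : ℝ :=
  ⨅ v : {v : H // v ∈ S ∧ ‖v‖ = 1}, (⟪(v : H), A v⟫).re

lemma abs_re_inner_map_le {H : Type*} [NormedAddCommGroup H] [InnerProductSpace ℂ H]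
    (A : H →L[ℂ] H) (v : H) : |(⟪v, A v⟫).re| ≤ ‖A‖ * ‖v‖ ^ 2 := by
  calc |(⟪v, A v⟫).re| ≤ ‖(⟪v, A v⟫ : ℂ)‖ := Complex.abs_re_le_norm _
    _ ≤ ‖v‖ * ‖A v‖ := norm_inner_le_norm _ _
    _ ≤ ‖v‖ * (‖A‖ * ‖v‖) := by
        gcongr
        exact A.le_opNorm v
    _ = ‖A‖ * ‖v‖ ^ 2 := by ring

lemma norm_inv_smul {H : Type*} [NormedAddCommGroup H] [InnerProductSpace ℂ H]
    {k : H} (hk0 : k ≠ 0) : ‖((‖k‖⁻¹ : ℝ) : ℂ) • k‖ = 1 := by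
  have hkn : (0:ℝ) < ‖k‖ := norm_pos_iff.mpr hk0
  rw [norm_smul]
  simp [abs_of_pos (inv_pos.mpr hkn), inv_mul_cancel₀ hkn.ne']

lemma lambdaMinOn_bdd {H : Type*} [NormedAddCommGroup H] [InnerProductSpace ℂ H]
    (A : H →L[ℂ] H) (S : Submodule ℂ H) :
    BddBelow (Set.range fun v : {v : H // v ∈ S ∧ ‖v‖ = 1} => (⟪(v : H), A v⟫).re) := by
  refine ⟨-‖A‖, ?_⟩
  rintro _ ⟨v, rfl⟩
  have h := abs_re_inner_map_le A (v : H)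
  rw [v.2.2] at h
  simp only [one_pow, mul_one] at h
  linarith [(abs_le.mp h).1]

lemma lambdaMinOn_le {H : Type*} [NormedAddCommGroup H] [InnerProductSpace ℂ H]
    (A : H →L[ℂ] H) (S : Submodule ℂ H) {x : H} (hx : x ∈ S) (hx1 : ‖x‖ = 1) :
    lambdaMinOn A S ≤ (⟪x, A x⟫).re :=
  ciInf_le (lambdaMinOn_bdd A S) ⟨x, hx, hx1⟩

lemma neg_norm_le_lambdaMinOn {H : Type*} [NormedAddCommGroup H] [InnerProductSpace ℂ H]
    (A : H →L[ℂ] H) (S : Submodule ℂ H) (hne : Nonempty {v : H // v ∈ S ∧ ‖v‖ = 1}) :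
    -‖A‖ ≤ lambdaMinOn A S := by
  refine le_ciInf fun v => ?_
  have h := abs_re_inner_map_le A (v : H)
  rw [v.2.2] at h
  simp only [one_pow, mul_one] at h
  linarith [(abs_le.mp h).1]

lemma lambdaMinOn_mul_le {H : Type*} [NormedAddCommGroup H] [InnerProductSpace ℂ H]
    (A : H →L[ℂ] H) (S : Submodule ℂ H) {x : H} (hx : x ∈ S) :
    lambdaMinOn A S * ‖x‖ ^ 2 ≤ (⟪x, A x⟫).re := by
  rcases eq_or_ne x 0 with rfl | hx0
  · simp
  · have hn : (0 : ℝ) < ‖x‖ := norm_pos_iff.mpr hx0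
    set c : ℂ := ((‖x‖⁻¹ : ℝ) : ℂ) with hc
    have hu1 : ‖c • x‖ = 1 := norm_inv_smul hx0
    have key := lambdaMinOn_le A S (S.smul_mem c hx) hu1
    have hinner : (⟪c • x, A (c • x)⟫ : ℂ) = ((‖x‖⁻¹ * ‖x‖⁻¹ : ℝ) : ℂ) * ⟪x, A x⟫ := by
      rw [map_smul, inner_smul_left, inner_smul_right, hc, Complex.conj_ofReal,
        Complex.ofReal_mul]
      ring
    rw [hinner, Complex.re_ofReal_mul] at key
    have h2 : (0 : ℝ) < ‖x‖ ^ 2 := by positivity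
    have hmul := mul_le_mul_of_nonneg_right key h2.le
    have hinv : ‖x‖⁻¹ * ‖x‖ = 1 := inv_mul_cancel₀ hn.ne'
    calc lambdaMinOn A S * ‖x‖ ^ 2 ≤ (‖x‖⁻¹ * ‖x‖⁻¹ * (⟪x, A x⟫).re) * ‖x‖ ^ 2 := hmul
      _ = (‖x‖⁻¹ * ‖x‖) * (‖x‖⁻¹ * ‖x‖) * (⟪x, A x⟫).re := by ring
      _ = (⟪x, A x⟫).re := by rw [hinv]; ring

lemma quad_arith {a L sx sy : ℝ} (ha0 : 0 ≤ a) (hL1 : -a ≤ L) (hL2 : L ≤ a)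
    (hsx0 : 0 ≤ sx) (hsy0 : 0 ≤ sy) (hsum : sx ^ 2 + sy ^ 2 = 1) :
    L - 1 / 8 ≤ L * sx ^ 2 - 2 * (a * sx * sy) - a * sy ^ 2 + (8 * a ^ 2 + 2 * a) * sy ^ 2 := by
  have hsx1 : sx ≤ 1 := by nlinarith
  have h1 : a * sx * sy ≤ a * sy := by
    nlinarith [mul_nonneg (mul_nonneg ha0 hsy0) (sub_nonneg.mpr hsx1)]
  have h2 : L * sx ^ 2 ≥ L - a * sy ^ 2 := by nlinarith
  nlinarith [sq_nonneg (8 * a * sy - 1)]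

/-- **Lemma A.3.** Let `H₁, H₂` be Hermitian operators on a nonzero finite-dimensional
complex inner product space, with `H₂` positive semidefinite, `K = ker H₂` nonzero and
proper, so that `μ = λ(H₂|_{K⊥}) > 0`. With `J = (8‖H₁‖² + 2‖H₁‖)/μ`, one has
`λ(H₁ + J·H₂) ≥ λ(H₁|_K) − 1/8`. -/
theorem projection_lemma_reformulated {H : Type*} [NormedAddCommGroup H]
    [InnerProductSpace ℂ H] [FiniteDimensional ℂ H] [Nontrivial H]
    (H1 H2 : H →L[ℂ] H)
    (h1 : ∀ x y : H, ⟪H1 x, y⟫ = ⟪x, H1 y⟫)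
    (h2 : ∀ x y : H, ⟪H2 x, y⟫ = ⟪x, H2 y⟫)
    (h2pos : ∀ v : H, 0 ≤ (⟪v, H2 v⟫).re)
    (K : Submodule ℂ H) (hK : K = LinearMap.ker (H2 : H →ₗ[ℂ] H))
    (hKbot : K ≠ ⊥) (hKtop : K ≠ ⊤)
    (μ : ℝ) (hμdef : μ = lambdaMinOn H2 Kᗮ) (hμpos : 0 < μ)
    (J : ℝ) (hJ : J = (8 * ‖H1‖ ^ 2 + 2 * ‖H1‖) / μ) :
    lambdaMin (H1 + (J : ℂ) • H2) ≥ lambdaMinOn H1 K - 1 / 8 := by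
  have ha0 : (0:ℝ) ≤ ‖H1‖ := norm_nonneg _
  have hJ0 : 0 ≤ J := by rw [hJ]; positivity
  have hJμ : J * μ = 8 * ‖H1‖ ^ 2 + 2 * ‖H1‖ := by
    rw [hJ]; field_simp
  -- a unit vector in K
  obtain ⟨k, hkK, hk0⟩ := Submodule.exists_mem_ne_zero_of_ne_bot hKbot
  have hu1 : ‖((‖k‖⁻¹ : ℝ) : ℂ) • k‖ = 1 := norm_inv_smul hk0
  have huK : ((‖k‖⁻¹ : ℝ) : ℂ) • k ∈ K := K.smul_mem _ hkK
  have hLle : lambdaMinOn H1 K ≤ ‖H1‖ := by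
    have h₁ := lambdaMinOn_le H1 K huK hu1
    have h₂ := abs_re_inner_map_le H1 (((‖k‖⁻¹ : ℝ) : ℂ) • k)
    rw [hu1] at h₂
    simp only [one_pow, mul_one] at h₂
    linarith [(abs_le.mp h₂).2]
  have hLge : -‖H1‖ ≤ lambdaMinOn H1 K :=
    neg_norm_le_lambdaMinOn H1 K ⟨⟨_, huK, hu1⟩⟩
  haveI : Nonempty {v : H // ‖v‖ = 1} := ⟨⟨_, hu1⟩⟩
  rw [ge_iff_le, lambdaMin]
  refine le_ciInf ?_
  rintro ⟨v, hv1⟩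
  simp only
  -- decompose v
  set x : H := (K.orthogonalProjectionOnto v : H) with hx
  have hxK : x ∈ K := (K.orthogonalProjectionOnto v).2
  have hyK : v - x ∈ Kᗮ := K.sub_starProjection_mem_orthogonal v
  set y : H := v - x with hy
  have hvxy : v = x + y := by rw [hy]; abel
  have hxy : (⟪x, y⟫ : ℂ) = 0 := Submodule.inner_right_of_mem_orthogonal hxK hyK
  have hnorm : ‖x‖ ^ 2 + ‖y‖ ^ 2 = 1 := by
    have h := norm_add_sq (𝕜 := ℂ) x y
    rw [← hvxy, hv1, hxy] at h
    simp only [map_zero, mul_zero, add_zero, one_pow] at h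
    linarith
  -- H2 kills x
  have hH2x : H2 x = 0 := by
    have hm : x ∈ LinearMap.ker (H2 : H →ₗ[ℂ] H) := by rw [← hK]; exact hxK
    exact hm
  -- value on H2 part
  have hre2 : (⟪v, H2 v⟫ : ℂ).re = (⟪y, H2 y⟫ : ℂ).re := by
    have hH2v : H2 v = H2 y := by rw [hvxy, map_add, hH2x, zero_add]
    rw [hH2v, hvxy, inner_add_left]
    have hz : (⟪x, H2 y⟫ : ℂ) = 0 := by rw [← h2 x y, hH2x, inner_zero_left]
    rw [hz, zero_add]
  have hH2y : μ * ‖y‖ ^ 2 ≤ (⟪y, H2 y⟫ : ℂ).re := by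
    rw [hμdef]; exact lambdaMinOn_mul_le H2 Kᗮ hyK
  -- value on H1 part
  have hcross : (⟪y, H1 x⟫ : ℂ).re = (⟪x, H1 y⟫ : ℂ).re := by
    have hc : (⟪y, H1 x⟫ : ℂ) = starRingEnd ℂ (⟪x, H1 y⟫ : ℂ) := by
      rw [← h1 y x, ← inner_conj_symm]
    rw [hc, Complex.conj_re]
  have hre1 : (⟪v, H1 v⟫ : ℂ).re
      = (⟪x, H1 x⟫ : ℂ).re + 2 * (⟪x, H1 y⟫ : ℂ).re + (⟪y, H1 y⟫ : ℂ).re := by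
    rw [hvxy, map_add, inner_add_left, inner_add_right, inner_add_right]
    simp only [Complex.add_re]
    rw [hcross]
    ring
  have hxx : lambdaMinOn H1 K * ‖x‖ ^ 2 ≤ (⟪x, H1 x⟫ : ℂ).re := lambdaMinOn_mul_le H1 K hxK
  have hxycross : |(⟪x, H1 y⟫ : ℂ).re| ≤ ‖H1‖ * ‖x‖ * ‖y‖ := by
    calc |(⟪x, H1 y⟫ : ℂ).re| ≤ ‖(⟪x, H1 y⟫ : ℂ)‖ := Complex.abs_re_le_norm _
      _ ≤ ‖x‖ * ‖H1 y‖ := norm_inner_le_norm _ _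
      _ ≤ ‖x‖ * (‖H1‖ * ‖y‖) := by gcongr; exact H1.le_opNorm y
      _ = ‖H1‖ * ‖x‖ * ‖y‖ := by ring
  have hyy : |(⟪y, H1 y⟫ : ℂ).re| ≤ ‖H1‖ * ‖y‖ ^ 2 := abs_re_inner_map_le H1 y
  -- total value
  have hval : (⟪v, (H1 + (J : ℂ) • H2) v⟫ : ℂ).re
      = (⟪v, H1 v⟫ : ℂ).re + J * (⟪v, H2 v⟫ : ℂ).re := by
    simp only [ContinuousLinearMap.add_apply, ContinuousLinearMap.smul_apply,
      inner_add_right, inner_smul_right, Complex.add_re, Complex.re_ofReal_mul]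
  rw [hval, hre1, hre2]
  have hJ2 : (8 * ‖H1‖ ^ 2 + 2 * ‖H1‖) * ‖y‖ ^ 2 ≤ J * (⟪y, H2 y⟫ : ℂ).re := by
    have h := mul_le_mul_of_nonneg_left hH2y hJ0
    calc (8 * ‖H1‖ ^ 2 + 2 * ‖H1‖) * ‖y‖ ^ 2 = J * (μ * ‖y‖ ^ 2) := by rw [← hJμ]; ring
      _ ≤ J * (⟪y, H2 y⟫ : ℂ).re := h
  have harith := quad_arith ha0 hLge hLle (norm_nonneg x) (norm_nonneg y) hnorm
  linarith [(abs_le.mp hxycross).1, (abs_le.mp hyy).1]
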